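/- In the setting of compatible inductive systems of C*-algebras with levelwise short exact sequences, if $b \in B = \varinjlim B_i$ satisfies $\psi(b) = 0$, then $b$ lies in the image of the induced map $\phi : A \to B$. Consequently $\mathrm{Ker}(\psi) = \mathrm{Im}(\phi)$. -/

import Mathlib

open scoped CStarAlgebra

lemma quasi_mem_le {A : Type*} [NonUnitalCStarAlgebra A] {a : A} {t : ℝ}
    (ht : t ∈ quasispectrum ℝ a) : ‖t‖ ≤ ‖a‖ := by
  rw [Unitization.quasispectrum_eq_spectrum_inr' ℝ ℂ] at ht
  simpa [Unitization.norm_inr] using spectrum.norm_le_norm_of_mem ht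

lemma key_approx {B C : Type*} [NonUnitalCStarAlgebra B] [NonUnitalCStarAlgebra C]
    (ψ : B →⋆ₙₐ[ℂ] C) (b : B) (δ : ℝ) (hδ : 0 < δ) (h : ‖ψ b‖ ≤ δ) :
    ∃ k : B, ψ k = 0 ∧ ‖b - k‖ ≤ δ := by
  set f : ℝ → ℝ := fun t => ((Real.sqrt t - δ) ⊔ 0) / (Real.sqrt t ⊔ δ) with hf_def
  have hden : ∀ t : ℝ, Real.sqrt t ⊔ δ ≠ 0 := fun t =>
    ne_of_gt (lt_of_lt_of_le hδ le_sup_right)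
  have hf_cont : Continuous f := by
    apply Continuous.div (by fun_prop) (by fun_prop) hden
  have hf0 : f 0 = 0 := by simp [hf_def, hδ.le]
  have hf_small : ∀ t : ℝ, t ≤ δ ^ 2 → f t = 0 := by
    intro t ht
    have : Real.sqrt t ≤ δ := by
      calc Real.sqrt t ≤ Real.sqrt (δ ^ 2) := Real.sqrt_le_sqrt ht
        _ = δ := Real.sqrt_sq hδ.le
    simp [hf_def, sub_nonpos.mpr this, sup_of_le_right, sub_nonpos.mpr this]
  have hone_sub : ∀ t : ℝ, 1 - f t = δ / (Real.sqrt t ⊔ δ) := by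
    intro t
    have h1 : (Real.sqrt t - δ) ⊔ 0 = (Real.sqrt t ⊔ δ) - δ := by
      rw [← max_sub_sub_right (Real.sqrt t) δ δ]; simp
    rw [hf_def]
    field_simp [h1]
    rw [h1]; ring
  set x : B := star b * b with hx_def
  have hx_sa : IsSelfAdjoint x := IsSelfAdjoint.star_mul_self b
  set e : B := cfcₙ f x with he_def
  have he_sa : IsSelfAdjoint e := cfcₙ_predicate f x
  refine ⟨b * e, ?_, ?_⟩
  · -- ψ (b * e) = 0
    have hψcont : Continuous ψ := map_continuous ψ
    have h1 : ψ e = cfcₙ f (ψ x) := by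
      exact NonUnitalStarAlgHomClass.map_cfcₙ ψ f x (hf_cont.continuousOn) hf0 hψcont hx_sa
        (hx_sa.map ψ)
    have h2 : cfcₙ f (ψ x) = 0 := by
      rw [← cfcₙ_zero ℝ (ψ x)]
      apply cfcₙ_congr
      intro t ht
      have htle : ‖t‖ ≤ ‖ψ x‖ := quasi_mem_le ht
      have hxb : ‖ψ x‖ ≤ δ ^ 2 := by
        calc ‖ψ x‖ = ‖star (ψ b) * ψ b‖ := by rw [hx_def, map_mul, map_star]
          _ = ‖ψ b‖ ^ 2 := by rw [CStarRing.norm_star_mul_self]; ring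
          _ ≤ δ ^ 2 := by nlinarith [norm_nonneg (ψ b)]
      have : t ≤ δ ^ 2 := le_trans (le_trans (le_abs_self t) htle) hxb
      simpa using hf_small t this
    rw [map_mul, h1, h2, mul_zero]
  · -- ‖b - b * e‖ ≤ δ
    have expand : star (b - b * e) * (b - b * e) = x - x * e - e * x + e * (x * e) := by
      simp only [star_sub, star_mul, he_sa.star_eq, hx_def]
      noncomm_ring
    have hxc : x = cfcₙ (fun t : ℝ => t) x := (cfcₙ_id' ℝ x hx_sa).symm
    have h1 : x * e = cfcₙ (fun t => t * f t) x := by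
      rw [cfcₙ_mul _ _ x (by fun_prop) rfl hf_cont.continuousOn hf0, cfcₙ_id' ℝ x hx_sa]
    have h2 : e * x = x * e :=
      hxc ▸ (cfcₙ_commute_cfcₙ f (fun t : ℝ => t) x).eq
    have h3 : e * (x * e) = cfcₙ (fun t => f t * (t * f t)) x := by
      rw [cfcₙ_mul _ _ x hf_cont.continuousOn hf0
        (by exact (continuousOn_id.mul hf_cont.continuousOn)) (by simp [hf0]), ← h1]
    have main : star (b - b * e) * (b - b * e)
        = cfcₙ (fun t => t * (1 - f t) ^ 2) x := by
      have hsplit : cfcₙ (fun t => t * (1 - f t) ^ 2) x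
          = cfcₙ (fun t : ℝ => t) x - cfcₙ (fun t => t * f t) x
            - cfcₙ (fun t => t * f t) x + cfcₙ (fun t => f t * (t * f t)) x := by
        rw [← cfcₙ_sub _ _ x (by fun_prop) rfl
            (by exact continuousOn_id.mul hf_cont.continuousOn) (by simp [hf0]),
          ← cfcₙ_sub _ _ x
            (by exact (continuousOn_id.sub (continuousOn_id.mul hf_cont.continuousOn)))
            (by simp [hf0]) (by exact continuousOn_id.mul hf_cont.continuousOn) (by simp [hf0]),
          ← cfcₙ_add _ _ x
            (by exact ((continuousOn_id.sub (continuousOn_id.mul hf_cont.continuousOn)).sub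
              (continuousOn_id.mul hf_cont.continuousOn)))
            (by simp [hf0])
            (by exact hf_cont.continuousOn.mul (continuousOn_id.mul hf_cont.continuousOn))
            (by simp [hf0])]
        apply cfcₙ_congr
        intro t _
        ring
      rw [expand, h2, h3, h1, hsplit, cfcₙ_id' ℝ x hx_sa]
    have hbound : ‖star (b - b * e) * (b - b * e)‖ ≤ δ ^ 2 := by
      rw [main]
      apply norm_cfcₙ_le
      intro t ht
      have ht0 : 0 ≤ t := by
        rw [Unitization.quasispectrum_eq_spectrum_inr' ℝ ℂ] at ht
        have hx' : ((x : B) : Unitization ℂ B)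
            = star ((b : B) : Unitization ℂ B) * ((b : B) : Unitization ℂ B) := by
          rw [hx_def, Unitization.inr_mul, Unitization.inr_star]
        rw [hx'] at ht
        exact spectrum_star_mul_self_nonneg t ht
      have hs : Real.sqrt t ⊔ δ > 0 := lt_of_lt_of_le hδ le_sup_right
      have htle : t ≤ (Real.sqrt t ⊔ δ) ^ 2 := by
        calc t = Real.sqrt t ^ 2 := (Real.sq_sqrt ht0).symm
          _ ≤ (Real.sqrt t ⊔ δ) ^ 2 := by
            apply pow_le_pow_left₀ (Real.sqrt_nonneg t) le_sup_left
      rw [hone_sub t]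
      rw [Real.norm_eq_abs, abs_of_nonneg (by positivity)]
      rw [div_pow, ← mul_div_assoc]
      rw [div_le_iff₀ (by positivity)]
      nlinarith
    have : ‖b - b * e‖ ^ 2 ≤ δ ^ 2 := by
      rwa [CStarRing.norm_star_mul_self, ← sq] at hbound

    nlinarith [norm_nonneg (b - b * e)]



/-- In the setting of compatible inductive systems of C*-algebras with levelwise short exact sequences, if `b` in the limit `B` satisfies `ψ b = 0` then `b` lies in the image of the induced map `φ : A → B`; consequently `Ker ψ = Im φ`.
-/
theorem stmt2
    {I : Type*} [Preorder I] [IsDirected I (· ≤ ·)] [Nonempty I]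
    (A B C : I → Type*)
    [∀ i, NonUnitalCStarAlgebra (A i)] [∀ i, NonUnitalCStarAlgebra (B i)]
    [∀ i, NonUnitalCStarAlgebra (C i)]
    -- connecting maps
    (α : ∀ i j, i ≤ j → (A i →⋆ₙₐ[ℂ] A j))
    (β : ∀ i j, i ≤ j → (B i →⋆ₙₐ[ℂ] B j))
    (γ : ∀ i j, i ≤ j → (C i →⋆ₙₐ[ℂ] C j))
    (hαid : ∀ i, α i i le_rfl = NonUnitalStarAlgHom.id ℂ (A i))
    (hβid : ∀ i, β i i le_rfl = NonUnitalStarAlgHom.id ℂ (B i))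
    (hγid : ∀ i, γ i i le_rfl = NonUnitalStarAlgHom.id ℂ (C i))
    (hαcomp : ∀ i j k (hij : i ≤ j) (hjk : j ≤ k),
      (α j k hjk).comp (α i j hij) = α i k (hij.trans hjk))
    (hβcomp : ∀ i j k (hij : i ≤ j) (hjk : j ≤ k),
      (β j k hjk).comp (β i j hij) = β i k (hij.trans hjk))
    (hγcomp : ∀ i j k (hij : i ≤ j) (hjk : j ≤ k),
      (γ j k hjk).comp (γ i j hij) = γ i k (hij.trans hjk))
    -- the inductive limits and their canonical maps
    {LA LB LC : Type*} [NonUnitalCStarAlgebra LA] [NonUnitalCStarAlgebra LB]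
    [NonUnitalCStarAlgebra LC]
    (ιA : ∀ i, A i →⋆ₙₐ[ℂ] LA) (ιB : ∀ i, B i →⋆ₙₐ[ℂ] LB) (ιC : ∀ i, C i →⋆ₙₐ[ℂ] LC)
    (hιA : ∀ i j (hij : i ≤ j), (ιA j).comp (α i j hij) = ιA i)
    (hιB : ∀ i j (hij : i ≤ j), (ιB j).comp (β i j hij) = ιB i)
    (hιC : ∀ i j (hij : i ≤ j), (ιC j).comp (γ i j hij) = ιC i)
    (hdA : closure (⋃ i, Set.range (ιA i)) = Set.univ)
    (hdB : closure (⋃ i, Set.range (ιB i)) = Set.univ)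
    (hdC : closure (⋃ i, Set.range (ιC i)) = Set.univ)
    (hnA : ∀ i (a : A i), ‖ιA i a‖ = ⨅ j : {j // i ≤ j}, ‖α i j.1 j.2 a‖)
    (hnB : ∀ i (b : B i), ‖ιB i b‖ = ⨅ j : {j // i ≤ j}, ‖β i j.1 j.2 b‖)
    (hnC : ∀ i (c : C i), ‖ιC i c‖ = ⨅ j : {j // i ≤ j}, ‖γ i j.1 j.2 c‖)
    -- the levelwise short exact sequences
    (φi : ∀ i, A i →⋆ₙₐ[ℂ] B i) (ψi : ∀ i, B i →⋆ₙₐ[ℂ] C i)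
    (hφinj : ∀ i, Function.Injective (φi i))
    (hψsurj : ∀ i, Function.Surjective (ψi i))
    (hexact : ∀ i, Set.range (φi i) = {b | ψi i b = 0})
    -- compatibility with the connecting maps
    (hφc : ∀ i j (hij : i ≤ j), (φi j).comp (α i j hij) = (β i j hij).comp (φi i))
    (hψc : ∀ i j (hij : i ≤ j), (ψi j).comp (β i j hij) = (γ i j hij).comp (ψi i))
    -- the induced maps on the limits
    (φ : LA →⋆ₙₐ[ℂ] LB) (ψ : LB →⋆ₙₐ[ℂ] LC)
    (hφ : ∀ i, φ.comp (ιA i) = (ιB i).comp (φi i))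
    (hψ : ∀ i, ψ.comp (ιB i) = (ιC i).comp (ψi i)) :
    (∀ b : LB, ψ b = 0 → b ∈ Set.range φ) ∧ {b : LB | ψ b = 0} = Set.range φ := by
  have hφcont : Continuous φ := map_continuous φ
  have hψcont : Continuous ψ := map_continuous ψ
  -- φ is isometric
  have hφnorm : ∀ y : LA, ‖φ y‖ = ‖y‖ := by
    have hclosed : IsClosed {y : LA | ‖φ y‖ = ‖y‖} :=
      isClosed_eq (continuous_norm.comp hφcont) continuous_norm
    have hsub : (⋃ i, Set.range (ιA i)) ⊆ {y : LA | ‖φ y‖ = ‖y‖} := by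
      rintro _ ⟨_, ⟨i, rfl⟩, a, rfl⟩
      show ‖φ (ιA i a)‖ = ‖ιA i a‖
      have h1 : φ (ιA i a) = ιB i (φi i a) := DFunLike.congr_fun (hφ i) a
      rw [h1, hnB, hnA]
      refine iInf_congr fun j => ?_
      have h2 : φi j.1 (α i j.1 j.2 a) = β i j.1 j.2 (φi i a) :=
        DFunLike.congr_fun (hφc i j.1 j.2) a
      rw [← h2]
      exact NonUnitalStarAlgHom.norm_map (φi j.1) (hφinj j.1) _
    intro y
    have hy : y ∈ closure (⋃ i, Set.range (ιA i)) := by rw [hdA]; trivial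
    exact (hclosed.closure_subset_iff.mpr hsub) hy
  have hφiso : Isometry φ := AddMonoidHomClass.isometry_of_norm φ hφnorm
  have hclrange : IsClosed (Set.range φ) := hφiso.isClosedEmbedding.isClosed_range
  have main : ∀ b : LB, ψ b = 0 → b ∈ Set.range φ := by
    intro b hb
    rw [← hclrange.closure_eq]
    rw [Metric.mem_closure_iff]
    intro ε hε
    -- approximate b by ιB i b_i
    have hbmem : b ∈ closure (⋃ i, Set.range (ιB i)) := by rw [hdB]; trivial
    rw [Metric.mem_closure_iff] at hbmem
    obtain ⟨z, hzmem, hzdist⟩ := hbmem (ε/4) (by positivity)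
    obtain ⟨_, ⟨i, rfl⟩, b_i, rfl⟩ := hzmem
    set c := ψi i b_i with hc_def
    have h1 : ‖ιC i c‖ < ε/4 := by
      have h2 : ιC i c = ψ (ιB i b_i) := (DFunLike.congr_fun (hψ i) b_i).symm
      have h3 : ψ (ιB i b_i) = ψ (ιB i b_i - b) := by rw [map_sub, hb, sub_zero]
      calc ‖ιC i c‖ = ‖ψ (ιB i b_i - b)‖ := by rw [h2, h3]
        _ ≤ ‖ιB i b_i - b‖ := NonUnitalStarAlgHom.norm_apply_le ψ _
        _ = dist b (ιB i b_i) := by rw [norm_sub_rev, ← dist_eq_norm]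
        _ < ε/4 := hzdist
    rw [hnC] at h1
    have : Nonempty {j // i ≤ j} := ⟨⟨i, le_rfl⟩⟩
    obtain ⟨⟨j, hij⟩, hj⟩ := exists_lt_of_ciInf_lt (lt_trans h1 (by linarith) :
      (⨅ j : {j // i ≤ j}, ‖γ i j.1 j.2 c‖) < ε/3)
    set x := β i j hij b_i with hx_def
    have hψx : ‖ψi j x‖ < ε/3 := by
      have h4 : ψi j x = γ i j hij c := DFunLike.congr_fun (hψc i j hij) b_i
      rw [h4]; exact hj
    obtain ⟨k, hk0, hkd⟩ := key_approx (ψi j) x (ε/3) (by positivity) hψx.le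
    have hkmem : k ∈ Set.range (φi j) := by rw [hexact j]; exact hk0
    obtain ⟨a, rfl⟩ := hkmem
    refine ⟨φ (ιA j a), ⟨ιA j a, rfl⟩, ?_⟩
    have h5 : φ (ιA j a) = ιB j (φi j a) := DFunLike.congr_fun (hφ j) a
    have h6 : ιB i b_i = ιB j x := (DFunLike.congr_fun (hιB i j hij) b_i).symm
    calc dist b (φ (ιA j a)) ≤ dist b (ιB i b_i) + dist (ιB i b_i) (φ (ιA j a)) :=
          dist_triangle _ _ _
      _ < ε/4 + dist (ιB i b_i) (φ (ιA j a)) := by linarith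
      _ ≤ ε/4 + ε/3 := by
          have : dist (ιB i b_i) (φ (ιA j a)) ≤ ε/3 := by
            rw [h5, h6, dist_eq_norm, ← map_sub]
            calc ‖ιB j (x - φi j a)‖ ≤ ‖x - φi j a‖ :=
                  NonUnitalStarAlgHom.norm_apply_le (ιB j) _
              _ ≤ ε/3 := hkd
          linarith
      _ < ε := by linarith
  refine ⟨main, Set.Subset.antisymm (fun b hb => main b hb) ?_⟩
  rintro _ ⟨y, rfl⟩
  show ψ (φ y) = 0
  have hclosed : IsClosed {y : LA | ψ (φ y) = 0} :=
    isClosed_eq (hψcont.comp hφcont) continuous_const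
  have hsub : (⋃ i, Set.range (ιA i)) ⊆ {y : LA | ψ (φ y) = 0} := by
    rintro _ ⟨_, ⟨i, rfl⟩, a, rfl⟩
    show ψ (φ (ιA i a)) = 0
    have h1 : φ (ιA i a) = ιB i (φi i a) := DFunLike.congr_fun (hφ i) a
    have h2 : ψ (ιB i (φi i a)) = ιC i (ψi i (φi i a)) := DFunLike.congr_fun (hψ i) (φi i a)
    have h3 : ψi i (φi i a) = 0 := by
      have : φi i a ∈ Set.range (φi i) := ⟨a, rfl⟩
      rw [hexact i] at this
      exact this
    rw [h1, h2, h3, map_zero]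
  have hy : y ∈ closure (⋃ i, Set.range (ιA i)) := by rw [hdA]; trivial
  exact (hclosed.closure_subset_iff.mpr hsub) hy
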